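/- Let {φ_j(λ)}_{j≥0} ⊂ ℂ[λ] satisfy the three-term recurrence α_j φ_{j+1}(λ) = (λ − β_j)φ_j(λ) − γ_j φ_{j−1}(λ) with REAL coefficients α_j, β_j, γ_j ∈ ℝ, α_j ≠ 0, φ_{−1} = 0, φ_0 = 1. Let k ≥ 2 and let P(λ) = Σ_{i=0}^{k} P_i φ_i(λ) with P_i ∈ ℂ^{m×m} Hermitian (P_i^* = P_i for all i) and P_k ≠ 0. Let L(λ) = λX + Y ∈ ℂ[λ]^{km×km} be a pencil satisfying L(λ)·(Φ_k(λ)⊗I_m) = v ⊗ P(λ) for some v ∈ ℂ^k. Then L(λ) is Hermitian (X^* = X and Y^* = Y) if and only if L(λ) is block-symmetric and every coordinate of v is real. In other words, ℍ(P) is exactly the subset of pencils in DM(P) with real ansatz vector. -/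
import Mathlib


open Matrix

/-- The column vector `Φ_k(λ) ⊗ I_m` as a `km × m` polynomial matrix. -/
noncomputable def phiKron (φ : ℕ → Polynomial ℂ) (k m : ℕ) :
    Matrix (Fin k × Fin m) (Fin m) (Polynomial ℂ) :=
  Matrix.of fun p j => if p.2 = j then φ (k - 1 - (p.1 : ℕ)) else 0

/-- The matrix `v ⊗ I_m ∈ R^{km×m}` built from a vector `v ∈ R^k`. -/
def vKron {R : Type*} [Semiring R] (k m : ℕ) (v : Fin k → R) :
    Matrix (Fin k × Fin m) (Fin m) R :=
  Matrix.of fun p j => if p.2 = j then v p.1 else 0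


section AuxHermitianPencil

open Polynomial Finset

lemma auxPhiDeg (α β γ : ℕ → ℝ) (hα : ∀ j, α j ≠ 0) (φ : ℕ → Polynomial ℂ) (hφ0 : φ 0 = 1)
    (hrec : ∀ j : ℕ, Polynomial.C ((α j : ℂ)) * φ (j + 1)
      = (Polynomial.X - Polynomial.C ((β j : ℂ))) * φ j
        - Polynomial.C ((γ j : ℂ)) * (if j = 0 then 0 else φ (j - 1))) :
    ∀ n, (φ n).natDegree ≤ n ∧ (φ n).coeff n ≠ 0 := by
  intro n
  induction n using Nat.strong_induction_on with
  | _ n ih =>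
    match n with
    | 0 => simp [hφ0]
    | (j+1) =>
      have hj := ih j (by omega)
      have hCa : ((α j : ℂ)) ≠ 0 := by
        simpa using hα j
      have hphi : φ (j+1) = Polynomial.C ((α j : ℂ))⁻¹ *
          ((Polynomial.X - Polynomial.C ((β j : ℂ))) * φ j
            - Polynomial.C ((γ j : ℂ)) * (if j = 0 then 0 else φ (j - 1))) := by
        rw [← hrec j, ← mul_assoc, ← Polynomial.C_mul, inv_mul_cancel₀ hCa, Polynomial.C_1,
          one_mul]
      constructor
      · rw [hphi]
        refine le_trans (natDegree_mul_le) ?_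
        have h1 : ((Polynomial.X - Polynomial.C ((β j : ℂ))) * φ j).natDegree ≤ j + 1 := by
          refine le_trans (natDegree_mul_le) ?_
          have : (Polynomial.X - Polynomial.C ((β j : ℂ))).natDegree = 1 :=
            Polynomial.natDegree_X_sub_C _
          omega
        have h2 : (Polynomial.C ((γ j : ℂ)) * (if j = 0 then 0 else φ (j - 1))).natDegree
            ≤ j + 1 := by
          refine le_trans (natDegree_mul_le) ?_
          have : ((if j = 0 then 0 else φ (j - 1)) : Polynomial ℂ).natDegree ≤ j + 1 := by
            split_ifs with h
            · simp
            · have := (ih (j-1) (by omega)).1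
              omega
          simpa using this
        have := Polynomial.natDegree_sub_le ((Polynomial.X - Polynomial.C ((β j : ℂ))) * φ j)
          (Polynomial.C ((γ j : ℂ)) * (if j = 0 then 0 else φ (j - 1)))
        simp only [natDegree_C, zero_add]
        omega
      · have hco := congrArg (fun p => Polynomial.coeff p (j+1)) (hrec j)
        simp only [Polynomial.coeff_C_mul, sub_mul, Polynomial.coeff_sub,
          Polynomial.coeff_X_mul] at hco
        have e1 : (φ j).coeff (j+1) = 0 :=
          Polynomial.coeff_eq_zero_of_natDegree_lt (by omega)
        have e2 : ((if j = 0 then 0 else φ (j - 1)) : Polynomial ℂ).coeff (j+1) = 0 := by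
          split_ifs with h
          · simp
          · exact Polynomial.coeff_eq_zero_of_natDegree_lt
              (lt_of_le_of_lt (ih (j-1) (by omega)).1 (by omega))
        rw [e1, e2] at hco
        simp only [mul_zero, sub_zero] at hco
        intro h0
        rw [h0, mul_zero] at hco
        exact hj.2 hco.symm

section
variable (α β γ : ℕ → ℝ) (φ : ℕ → Polynomial ℂ)

lemma auxPhiLi (hφ0 : φ 0 = 1)
    (hdeg : ∀ n, (φ n).natDegree ≤ n ∧ (φ n).coeff n ≠ 0) :
    ∀ (N : ℕ) (c : ℕ → ℂ),
      (∑ n ∈ Finset.range (N+1), Polynomial.C (c n) * φ n = 0) → ∀ n, n ≤ N → c n = 0 := by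
  intro N
  induction N with
  | zero =>
    intro c h n hn
    interval_cases n
    have : Polynomial.C (c 0) = 0 := by simpa [hφ0] using h
    simpa using this
  | succ N ihN =>
    intro c h
    have hc : c (N+1) = 0 := by
      have hco := congrArg (fun p => Polynomial.coeff p (N+1)) h
      simp only [Polynomial.finset_sum_coeff, Polynomial.coeff_C_mul, Polynomial.coeff_zero] at hco
      rw [Finset.sum_eq_single (N+1)] at hco
      · have := (hdeg (N+1)).2
        rcases mul_eq_zero.mp hco with h'|h'
        · exact h'
        · exact absurd h' this
      · intro b hb hbne
        rw [Polynomial.coeff_eq_zero_of_natDegree_lt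
          (lt_of_le_of_lt (hdeg b).1 (by simp at hb; omega)), mul_zero]
      · intro hmem
        simp at hmem
    have h' : ∑ n ∈ Finset.range (N+1), Polynomial.C (c n) * φ n = 0 := by
      rw [Finset.sum_range_succ, hc] at h
      simpa using h
    intro n hn
    rcases Nat.lt_or_ge n (N+1) with h''|h''
    · exact ihN c h' n (by omega)
    · have : n = N+1 := by omega
      rw [this]; exact hc
end

section
variable (α β γ : ℕ → ℝ) (φ : ℕ → Polynomial ℂ)

lemma auxExpand
    (hrec : ∀ j : ℕ, Polynomial.C ((α j : ℂ)) * φ (j + 1)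
      = (Polynomial.X - Polynomial.C ((β j : ℂ))) * φ j
        - Polynomial.C ((γ j : ℂ)) * (if j = 0 then 0 else φ (j - 1)))
    (k : ℕ) (x y : ℕ → ℂ) (hx : ∀ n, k ≤ n → x n = 0) (hy : ∀ n, k ≤ n → y n = 0) :
    ∑ n ∈ Finset.range k, (Polynomial.X * Polynomial.C (x n) + Polynomial.C (y n)) * φ n
      = ∑ n ∈ Finset.range (k+1),
          Polynomial.C ((if n = 0 then 0 else (α (n-1) : ℂ) * x (n-1))
            + (β n : ℂ) * x n + (γ (n+1) : ℂ) * x (n+1) + y n) * φ n := by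
  have hX : ∀ n, Polynomial.X * φ n
      = Polynomial.C ((α n : ℂ)) * φ (n+1) + Polynomial.C ((β n : ℂ)) * φ n
        + Polynomial.C ((γ n : ℂ)) * (if n = 0 then 0 else φ (n-1)) := by
    intro n; linear_combination - hrec n
  set T1 : ℕ → Polynomial ℂ :=
    fun n => Polynomial.C ((if n = 0 then 0 else (α (n-1) : ℂ) * x (n-1))) * φ n with hT1
  set T2 : ℕ → Polynomial ℂ := fun n => Polynomial.C ((β n : ℂ) * x n) * φ n with hT2
  set T3 : ℕ → Polynomial ℂ := fun n => Polynomial.C ((γ (n+1) : ℂ) * x (n+1)) * φ n with hT3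
  set T4 : ℕ → Polynomial ℂ := fun n => Polynomial.C (y n) * φ n with hT4
  have rhs_eq : ∑ n ∈ Finset.range (k+1),
          Polynomial.C ((if n = 0 then 0 else (α (n-1) : ℂ) * x (n-1))
            + (β n : ℂ) * x n + (γ (n+1) : ℂ) * x (n+1) + y n) * φ n
      = (∑ n ∈ Finset.range (k+1), T1 n) + (∑ n ∈ Finset.range (k+1), T2 n)
        + (∑ n ∈ Finset.range (k+1), T3 n) + (∑ n ∈ Finset.range (k+1), T4 n) := by
    rw [← Finset.sum_add_distrib, ← Finset.sum_add_distrib, ← Finset.sum_add_distrib]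
    refine Finset.sum_congr rfl fun n _ => ?_
    simp only [hT1, hT2, hT3, hT4, Polynomial.C_add]
    ring
  rw [rhs_eq]
  have e1 : ∑ n ∈ Finset.range (k+1), T1 n
      = ∑ n ∈ Finset.range k, Polynomial.C (x n) * (Polynomial.C ((α n : ℂ)) * φ (n+1)) := by
    rw [Finset.sum_range_succ']
    have h0 : T1 0 = 0 := by simp [hT1]
    rw [h0, add_zero]
    refine Finset.sum_congr rfl fun n _ => ?_
    simp only [hT1]
    rw [if_neg (Nat.succ_ne_zero n), Nat.add_sub_cancel, Polynomial.C_mul]; ring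
  have e2 : ∑ n ∈ Finset.range (k+1), T2 n
      = ∑ n ∈ Finset.range k, Polynomial.C (x n) * (Polynomial.C ((β n : ℂ)) * φ n) := by
    rw [Finset.sum_range_succ]
    have h0 : T2 k = 0 := by simp [hT2, hx k le_rfl]
    rw [h0, add_zero]
    refine Finset.sum_congr rfl fun n _ => ?_
    simp only [hT2]
    rw [Polynomial.C_mul]; ring
  have e4 : ∑ n ∈ Finset.range (k+1), T4 n
      = ∑ n ∈ Finset.range k, Polynomial.C (y n) * φ n := by
    rw [Finset.sum_range_succ]
    have h0 : T4 k = 0 := by simp [hT4, hy k le_rfl]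
    rw [h0, add_zero]
  have e3 : ∑ n ∈ Finset.range (k+1), T3 n
      = ∑ n ∈ Finset.range k,
          Polynomial.C (x n) * (Polynomial.C ((γ n : ℂ)) * (if n = 0 then 0 else φ (n-1))) := by
    have A : ∑ n ∈ Finset.range k,
          Polynomial.C (x n) * (Polynomial.C ((γ n : ℂ)) * (if n = 0 then 0 else φ (n-1)))
        = ∑ n ∈ Finset.range k,
            Polynomial.C (x (n+1)) * (Polynomial.C ((γ (n+1) : ℂ)) * φ n) := by
      have g0 : ∑ n ∈ Finset.range k,
            Polynomial.C (x n) * (Polynomial.C ((γ n : ℂ)) * (if n = 0 then 0 else φ (n-1)))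
          = ∑ n ∈ Finset.range (k+1),
            Polynomial.C (x n) * (Polynomial.C ((γ n : ℂ)) * (if n = 0 then 0 else φ (n-1))) := by
        rw [Finset.sum_range_succ, hx k le_rfl]
        simp
      have hs := Finset.sum_range_succ' (fun n => Polynomial.C (x n) *
        (Polynomial.C ((γ n : ℂ)) * (if n = 0 then (0 : Polynomial ℂ) else φ (n-1)))) k
      rw [g0]
      rw [hs]
      simp
    have B : ∑ n ∈ Finset.range (k+1), T3 n
        = ∑ n ∈ Finset.range k,
            Polynomial.C (x (n+1)) * (Polynomial.C ((γ (n+1) : ℂ)) * φ n) := by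
      rw [Finset.sum_range_succ]
      have h0 : T3 k = 0 := by simp [hT3, hx (k+1) (by omega)]
      rw [h0, add_zero]
      refine Finset.sum_congr rfl fun n _ => ?_
      simp only [hT3]
      rw [Polynomial.C_mul]; ring
    rw [B, A]
  rw [e1, e2, e3, e4, ← Finset.sum_add_distrib, ← Finset.sum_add_distrib,
    ← Finset.sum_add_distrib]
  refine Finset.sum_congr rfl fun n _ => ?_
  linear_combination Polynomial.C (x n) * hX n
end

/-- One scalar three-term equation family. -/
def RowE (α β γ : ℕ → ℝ) (x y c : ℕ → ℂ) : Prop :=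
  ∀ n : ℕ, (if n = 0 then 0 else (α (n-1) : ℂ) * x (n-1))
      + (β n : ℂ) * x n + (γ (n+1) : ℂ) * x (n+1) + y n = c n

lemma rowE_conj (α β γ : ℕ → ℝ) (x y c : ℕ → ℂ) (h : RowE α β γ x y c) :
    RowE α β γ (fun n => (starRingEnd ℂ) (x n)) (fun n => (starRingEnd ℂ) (y n))
      (fun n => (starRingEnd ℂ) (c n)) := by
  intro n
  have := congrArg (starRingEnd ℂ) (h n)
  simpa [map_add, _root_.map_mul, Complex.conj_ofReal, apply_ite] using this

lemma rowE_sub (α β γ : ℕ → ℝ) (x y c x' y' : ℕ → ℂ) (h : RowE α β γ x y c)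
    (h' : RowE α β γ x' y' c) :
    RowE α β γ (fun n => x n - x' n) (fun n => y n - y' n) (fun _ => 0) := by
  intro n
  have h1 := h n
  have h2 := h' n
  split_ifs with hn
  · rw [if_pos hn] at h1 h2
    linear_combination h1 - h2
  · rw [if_neg hn] at h1 h2
    linear_combination h1 - h2

lemma rowE_congr (α β γ : ℕ → ℝ) (x y c x' y' c' : ℕ → ℂ) (h : RowE α β γ x y c)
    (hx : ∀ n, x n = x' n) (hy : ∀ n, y n = y' n) (hc : ∀ n, c n = c' n) :
    RowE α β γ x' y' c' := by
  have hx' : x = x' := funext hx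
  have hy' : y = y' := funext hy
  have hc' : c = c' := funext hc
  rw [← hx', ← hy', ← hc']; exact h

lemma auxUniq (α β γ : ℕ → ℝ) (hα : ∀ j, α j ≠ 0) (k : ℕ) (hk : 1 ≤ k)
    (u z : ℕ → ℕ → ℂ)
    (hu : ∀ a b, k ≤ a ∨ k ≤ b → u a b = 0) (hz : ∀ a b, k ≤ a ∨ k ≤ b → z a b = 0)
    (hrow : ∀ a, a < k → RowE α β γ (u a) (z a) (fun _ => 0))
    (hcol : ∀ b, b < k → RowE α β γ (fun j => u j b) (fun j => z j b) (fun _ => 0)) :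
    (∀ a b, u a b = 0) ∧ (∀ a b, z a b = 0) := by
  have hαC : ∀ j, ((α j : ℂ)) ≠ 0 := fun j => by simpa using hα j
  have hb1 : ∀ a, u a (k-1) = 0 := by
    intro a
    by_cases ha : a < k
    · have h := hrow a ha k
      rw [if_neg (by omega), hu a k (Or.inr le_rfl), hu a (k+1) (Or.inr (by omega)),
        hz a k (Or.inr le_rfl)] at h
      simp only [mul_zero, add_zero] at h
      exact (mul_eq_zero.mp h).resolve_left (hαC _)
    · exact hu a _ (Or.inl (by omega))
  have hb2 : ∀ b, u (k-1) b = 0 := by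
    intro b
    by_cases hb : b < k
    · have h := hcol b hb k
      beta_reduce at h
      rw [if_neg (by omega), hu k b (Or.inl le_rfl), hu (k+1) b (Or.inl (by omega)),
        hz k b (Or.inl le_rfl)] at h
      simp only [mul_zero, add_zero] at h
      exact (mul_eq_zero.mp h).resolve_left (hαC _)
    · exact hu _ b (Or.inr (by omega))
  have main : ∀ e a b, 2*k ≤ a + b + e + 2 → u a b = 0 := by
    intro e
    induction e with
    | zero =>
      intro a b h
      by_cases ha : k ≤ a
      · exact hu a b (Or.inl ha)
      by_cases hb : k ≤ b
      · exact hu a b (Or.inr hb)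
      have : a = k - 1 := by omega
      subst this
      exact hb2 b
    | succ e ihe =>
      have inner : ∀ b a, a + b + e + 3 = 2*k → u a b = 0 := by
        intro b
        induction b using Nat.strong_induction_on with
        | _ b ihb =>
          intro a ht
          by_cases hbk : k ≤ b
          · exact hu a b (Or.inr hbk)
          by_cases hak : k ≤ a
          · exact hu a b (Or.inl hak)
          by_cases hak1 : a = k - 1
          · rw [hak1]; exact hb2 b
          have ha2 : a + 1 < k := by omega
          have hr := hrow (a+1) ha2 b
          have hc := hcol b (by omega) (a+1)
          beta_reduce at hc
          rw [if_neg (Nat.succ_ne_zero a), Nat.add_sub_cancel] at hc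
          have e1 : u (a+1) b = 0 := ihe (a+1) b (by omega)
          have e2 : u (a+1) (b+1) = 0 := ihe (a+1) (b+1) (by omega)
          have e3 : u (a+2) b = 0 := ihe (a+2) b (by omega)
          have e4 : (if b = 0 then (0:ℂ) else (α (b-1) : ℂ) * u (a+1) (b-1)) = 0 := by
            by_cases hb0 : b = 0
            · rw [if_pos hb0]
            · rw [if_neg hb0, ihb (b-1) (by omega) (a+1) (by omega), mul_zero]
          rw [e1, e2, e4] at hr
          simp only [mul_zero, add_zero, zero_add] at hr
          rw [e1, e3, hr] at hc
          simp only [mul_zero, add_zero] at hc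
          exact (mul_eq_zero.mp hc).resolve_left (hαC _)
      intro a b h
      by_cases hE : 2*k ≤ a + b + e + 2
      · exact ihe a b hE
      · exact inner b a (by omega)
  have hu0 : ∀ a b, u a b = 0 := fun a b => main (2*k) a b (by omega)
  refine ⟨hu0, ?_⟩
  intro a b
  by_cases ha : a < k
  · have h := hrow a ha b
    simp only [hu0, mul_zero, add_zero, ite_self, zero_add] at h
    exact h
  · exact hz a b (Or.inl (by omega))

lemma auxPencilCoeff (a b a' b' : ℂ)
    (h : Polynomial.X * Polynomial.C a + Polynomial.C b
        = Polynomial.X * Polynomial.C a' + Polynomial.C b') : a = a' ∧ b = b' := by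
  constructor
  · have := congrArg (fun p => Polynomial.coeff p 1) h
    simpa [Polynomial.coeff_X_mul, Polynomial.coeff_C] using this
  · have := congrArg (fun p => Polynomial.coeff p 0) h
    simpa [Polynomial.mul_coeff_zero, Polynomial.coeff_C] using this

section
variable (α β γ : ℕ → ℝ) (φ : ℕ → Polynomial ℂ)

lemma auxCore (hφ0 : φ 0 = 1)
    (hdeg : ∀ n, (φ n).natDegree ≤ n ∧ (φ n).coeff n ≠ 0)
    (hli : ∀ (N : ℕ) (c : ℕ → ℂ),
      (∑ n ∈ Finset.range (N+1), Polynomial.C (c n) * φ n = 0) → ∀ n, n ≤ N → c n = 0)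
    (hexp : ∀ (k : ℕ) (x y : ℕ → ℂ), (∀ n, k ≤ n → x n = 0) → (∀ n, k ≤ n → y n = 0) →
      ∑ n ∈ Finset.range k, (Polynomial.X * Polynomial.C (x n) + Polynomial.C (y n)) * φ n
      = ∑ n ∈ Finset.range (k+1),
          Polynomial.C ((if n = 0 then 0 else (α (n-1) : ℂ) * x (n-1))
            + (β n : ℂ) * x n + (γ (n+1) : ℂ) * x (n+1) + y n) * φ n)
    (k : ℕ) (x y c : ℕ → ℂ)
    (hx : ∀ n, k ≤ n → x n = 0) (hy : ∀ n, k ≤ n → y n = 0)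
    (hc : ∀ n, k+1 ≤ n → c n = 0)
    (h : ∑ n ∈ Finset.range k,
          (Polynomial.X * Polynomial.C (x n) + Polynomial.C (y n)) * φ n
        = ∑ n ∈ Finset.range (k+1), Polynomial.C (c n) * φ n) :
    RowE α β γ x y c := by
  rw [hexp k x y hx hy] at h
  have h0 : ∑ n ∈ Finset.range (k+1),
      Polynomial.C (((if n = 0 then 0 else (α (n-1) : ℂ) * x (n-1))
            + (β n : ℂ) * x n + (γ (n+1) : ℂ) * x (n+1) + y n) - c n) * φ n = 0 := by
    simp only [Polynomial.C_sub, sub_mul, Finset.sum_sub_distrib, h, sub_self]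
  have hall := hli k _ h0
  intro n
  by_cases hn : n ≤ k
  · exact sub_eq_zero.mp (hall n hn)
  · rw [hx n (by omega), hx (n+1) (by omega), hy n (by omega), hc n (by omega),
      if_neg (by omega : ¬ n = 0), hx (n-1) (by omega)]
    ring
end

end AuxHermitianPencil

/-- Let `{φ_j} ⊂ ℂ[λ]` satisfy a three-term recurrence with *real*
coefficients, and let `P(λ) = Σ_{i=0}^{k} P_i φ_i(λ)` with all `P_i` Hermitian and `P_k ≠ 0`.
A pencil `L(λ) = λX + Y` with `L(λ)(Φ_k(λ)⊗I_m) = v ⊗ P(λ)` is Hermitian iff it is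
block-symmetric and all coordinates of `v` are real: `ℍ(P)` is the subset of pencils in
`𝔻𝕄(P)` with real ansatz vector. -/
theorem hermitian_pencils_eq_DM_real_ansatz
    {m k : ℕ} (hk : 2 ≤ k)
    (α β γ : ℕ → ℝ) (hα : ∀ j, α j ≠ 0)
    (φ : ℕ → Polynomial ℂ) (hφ0 : φ 0 = 1)
    (hrec : ∀ j : ℕ, Polynomial.C ((α j : ℂ)) * φ (j + 1)
      = (Polynomial.X - Polynomial.C ((β j : ℂ))) * φ j
        - Polynomial.C ((γ j : ℂ)) * (if j = 0 then 0 else φ (j - 1)))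
    (P : ℕ → Matrix (Fin m) (Fin m) ℂ) (hPherm : ∀ i, (P i).IsHermitian) (hPk : P k ≠ 0)
    (X Y : Matrix (Fin k × Fin m) (Fin k × Fin m) ℂ)
    (L : Matrix (Fin k × Fin m) (Fin k × Fin m) (Polynomial ℂ))
    (hL : L = Matrix.of fun p q => Polynomial.X * Polynomial.C (X p q) + Polynomial.C (Y p q))
    (v : Fin k → ℂ)
    (hansatz : L * phiKron φ k m
      = vKron k m (fun i => Polynomial.C (v i)) *
          (∑ i ∈ Finset.range (k + 1), (P i).map (fun a => φ i * Polynomial.C a))) :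
    (X.IsHermitian ∧ Y.IsHermitian) ↔
      ((∀ (i j : Fin k) (r s : Fin m), L (i, r) (j, s) = L (j, r) (i, s)) ∧
        ∀ i, (v i).im = 0) := by
  classical
  subst hL
  have hdeg := auxPhiDeg α β γ hα φ hφ0 hrec
  have hli := auxPhiLi φ hφ0 hdeg
  have hexp := auxExpand α β γ φ hrec
  have hαC : ∀ j, ((α j : ℂ)) ≠ 0 := fun j => by simpa using hα j
  have hrr : ∀ (i : Fin k) (h : ((Fin.rev i : Fin k) : ℕ) < k),
      (Fin.rev (⟨((Fin.rev i : Fin k) : ℕ), h⟩ : Fin k)) = i := by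
    intro i h
    have he : (⟨((Fin.rev i : Fin k) : ℕ), h⟩ : Fin k) = Fin.rev i := rfl
    rw [he, Fin.rev_rev]
  -- scalar entry arrays
  set u : Fin m → Fin m → ℕ → ℕ → ℂ := fun r s a b =>
    if h : a < k ∧ b < k then X (Fin.rev ⟨a, h.1⟩, r) (Fin.rev ⟨b, h.2⟩, s) else 0 with hu_def
  set z : Fin m → Fin m → ℕ → ℕ → ℂ := fun r s a b =>
    if h : a < k ∧ b < k then Y (Fin.rev ⟨a, h.1⟩, r) (Fin.rev ⟨b, h.2⟩, s) else 0 with hz_def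
  set w : ℕ → ℂ := fun a => if h : a < k then v (Fin.rev ⟨a, h⟩) else 0 with hw_def
  set cf : Fin m → Fin m → ℕ → ℕ → ℂ :=
    fun r s a n => if n ≤ k then w a * P n r s else 0 with hc_def
  set Q : Fin m → Fin m → Polynomial ℂ :=
    fun r s => ∑ n ∈ Finset.range (k+1), φ n * Polynomial.C (P n r s) with hQ_def
  have huval : ∀ (r s : Fin m) (i j : Fin k),
      u r s ((Fin.rev i : Fin k) : ℕ) ((Fin.rev j : Fin k) : ℕ) = X (i, r) (j, s) := by
    intro r s i j
    simp only [hu_def]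
    rw [dif_pos (show ((Fin.rev i : Fin k) : ℕ) < k ∧ ((Fin.rev j : Fin k) : ℕ) < k from ⟨(Fin.rev i).isLt, (Fin.rev j).isLt⟩)]
    rw [hrr, hrr]
  have hzval : ∀ (r s : Fin m) (i j : Fin k),
      z r s ((Fin.rev i : Fin k) : ℕ) ((Fin.rev j : Fin k) : ℕ) = Y (i, r) (j, s) := by
    intro r s i j
    simp only [hz_def]
    rw [dif_pos (show ((Fin.rev i : Fin k) : ℕ) < k ∧ ((Fin.rev j : Fin k) : ℕ) < k from ⟨(Fin.rev i).isLt, (Fin.rev j).isLt⟩)]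
    rw [hrr, hrr]
  have hu0 : ∀ (r s : Fin m) (a b : ℕ), k ≤ a ∨ k ≤ b → u r s a b = 0 := by
    intro r s a b hab
    simp only [hu_def]
    exact dif_neg (by omega)
  have hz0 : ∀ (r s : Fin m) (a b : ℕ), k ≤ a ∨ k ≤ b → z r s a b = 0 := by
    intro r s a b hab
    simp only [hz_def]
    exact dif_neg (by omega)
  have hwval : ∀ i : Fin k, w ((Fin.rev i : Fin k) : ℕ) = v i := by
    intro i
    simp only [hw_def]
    rw [dif_pos (Fin.rev i).isLt]
    rw [hrr]
  have hcf0 : ∀ (r s : Fin m) (a n : ℕ), k + 1 ≤ n → cf r s a n = 0 := by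
    intro r s a n hn
    simp only [hc_def]
    exact if_neg (by omega)
  -- the polynomial row identities coming from the ansatz equation
  have hROWpoly : ∀ (r s : Fin m) (a : ℕ), a < k →
      ∑ n ∈ Finset.range k,
          (Polynomial.X * Polynomial.C (u r s a n) + Polynomial.C (z r s a n)) * φ n
        = ∑ n ∈ Finset.range (k+1), Polynomial.C (cf r s a n) * φ n := by
    intro r s a ha
    set i : Fin k := Fin.rev ⟨a, ha⟩ with hi_def
    have h1 := congrFun (congrFun hansatz (i, r)) s
    rw [Matrix.mul_apply, Matrix.mul_apply] at h1
    rw [Fintype.sum_prod_type] at h1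
    simp only [phiKron, vKron, Matrix.of_apply, Matrix.sum_apply, Matrix.map_apply,
      mul_ite, mul_zero, ite_mul, zero_mul, Finset.sum_ite_eq, Finset.sum_ite_eq',
      Finset.mem_univ, if_true] at h1
    rw [show (∑ x : Fin k, (Polynomial.X * Polynomial.C (X (i, r) (x, s))
          + Polynomial.C (Y (i, r) (x, s))) * φ (k - 1 - (x : ℕ)))
        = ∑ x : Fin k, (Polynomial.X * Polynomial.C (X (i, r) (Fin.rev x, s))
          + Polynomial.C (Y (i, r) (Fin.rev x, s))) * φ (k - 1 - ((Fin.rev x : Fin k) : ℕ))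
      from (Fintype.sum_bijective Fin.rev Fin.rev_bijective _ _ (fun x => rfl)).symm] at h1
    have hLs : ∑ x : Fin k, (Polynomial.X * Polynomial.C (X (i, r) (Fin.rev x, s))
          + Polynomial.C (Y (i, r) (Fin.rev x, s))) * φ (k - 1 - ((Fin.rev x : Fin k) : ℕ))
        = ∑ n ∈ Finset.range k,
            (Polynomial.X * Polynomial.C (u r s a n) + Polynomial.C (z r s a n)) * φ n := by
      rw [← Fin.sum_univ_eq_sum_range (fun n =>
        (Polynomial.X * Polynomial.C (u r s a n) + Polynomial.C (z r s a n)) * φ n) k]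
      refine Finset.sum_congr rfl fun q _ => ?_
      have hq : k - 1 - ((Fin.rev q : Fin k) : ℕ) = (q : ℕ) := by
        have h2 := q.isLt
        rw [Fin.val_rev]; omega
      rw [hq]
      have hu' : u r s a (q : ℕ) = X (i, r) (Fin.rev q, s) := by
        simp only [hu_def]
        rw [dif_pos (show a < k ∧ (q : ℕ) < k from ⟨ha, q.isLt⟩)]
      have hz' : z r s a (q : ℕ) = Y (i, r) (Fin.rev q, s) := by
        simp only [hz_def]
        rw [dif_pos (show a < k ∧ (q : ℕ) < k from ⟨ha, q.isLt⟩)]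
      rw [hu', hz']
    rw [hLs] at h1
    rw [h1, Finset.mul_sum]
    refine Finset.sum_congr rfl fun n hn => ?_
    have hn' : n ≤ k := by
      have := Finset.mem_range.mp hn
      omega
    have hw' : w a = v i := by
      simp only [hw_def, hi_def]
      rw [dif_pos ha]
    simp only [hc_def]
    rw [if_pos hn', hw', Polynomial.C_mul]
    ring
  have hRowE : ∀ (r s : Fin m) (a : ℕ), a < k →
      RowE α β γ (u r s a) (z r s a) (cf r s a) := by
    intro r s a ha
    exact auxCore α β γ φ hφ0 hdeg hli hexp k (u r s a) (z r s a) (cf r s a)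
      (fun n hn => hu0 r s a n (Or.inr hn)) (fun n hn => hz0 r s a n (Or.inr hn))
      (fun n hn => hcf0 r s a n hn) (hROWpoly r s a ha)
  have hPc : ∀ (n : ℕ) (r s : Fin m), (starRingEnd ℂ) (P n s r) = P n r s := by
    intro n r s
    have h := congrFun (congrFun (hPherm n) r) s
    rw [← h, Matrix.conjTranspose_apply, starRingEnd_apply]
  obtain ⟨r0, s0, hP0⟩ : ∃ r s, P k r s ≠ 0 := by
    by_contra h
    push_neg at h
    exact hPk (Matrix.ext fun r s => h r s)
  have hQcoeff : (Q r0 s0).coeff k ≠ 0 := by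
    simp only [hQ_def]
    rw [Polynomial.finset_sum_coeff, Finset.sum_eq_single k]
    · rw [Polynomial.coeff_mul_C]
      exact mul_ne_zero (hdeg k).2 hP0
    · intro b hb hbne
      rw [Polynomial.coeff_mul_C, Polynomial.coeff_eq_zero_of_natDegree_lt
        (lt_of_le_of_lt (hdeg b).1 (by have := Finset.mem_range.mp hb; omega)), zero_mul]
    · intro h
      exact absurd (Finset.mem_range.mpr (by omega)) h
  have hQne : Q r0 s0 ≠ 0 := fun h0 => hQcoeff (by rw [h0, Polynomial.coeff_zero])
  have hQgen : ∀ (r s : Fin m) (t : ℂ),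
      ∑ n ∈ Finset.range (k+1), Polynomial.C (if n ≤ k then t * P n r s else 0) * φ n
        = Polynomial.C t * Q r s := by
    intro r s t
    simp only [hQ_def]
    rw [Finset.mul_sum]
    refine Finset.sum_congr rfl fun n hn => ?_
    rw [if_pos (by have := Finset.mem_range.mp hn; omega : n ≤ k), Polynomial.C_mul]
    ring
  have hQR : ∀ (r s : Fin m) (a : ℕ),
      ∑ n ∈ Finset.range (k+1), Polynomial.C (cf r s a n) * φ n
        = Polynomial.C (w a) * Q r s := by
    intro r s a
    rw [← hQgen r s (w a)]
    all_goals exact Finset.sum_congr rfl fun n _ => by simp only [hc_def]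
  constructor
  · rintro ⟨hXH, hYH⟩
    have hXc : ∀ p q, X p q = (starRingEnd ℂ) (X q p) := by
      intro p q
      conv_lhs => rw [← hXH]
      rw [Matrix.conjTranspose_apply, starRingEnd_apply]
    have hYc : ∀ p q, Y p q = (starRingEnd ℂ) (Y q p) := by
      intro p q
      conv_lhs => rw [← hYH]
      rw [Matrix.conjTranspose_apply, starRingEnd_apply]
    have huc : ∀ (r s : Fin m) (a b : ℕ), u r s a b = (starRingEnd ℂ) (u s r b a) := by
      intro r s a b
      by_cases hab : a < k ∧ b < k
      · simp only [hu_def]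
        rw [dif_pos hab, dif_pos (show b < k ∧ a < k from ⟨hab.2, hab.1⟩)]
        exact hXc _ _
      · have h1 : u r s a b = 0 := by simp only [hu_def]; exact dif_neg hab
        have h2 : u s r b a = 0 := by
          simp only [hu_def]; exact dif_neg (fun hh => hab ⟨hh.2, hh.1⟩)
        rw [h1, h2, map_zero]
    have hzc : ∀ (r s : Fin m) (a b : ℕ), z r s a b = (starRingEnd ℂ) (z s r b a) := by
      intro r s a b
      by_cases hab : a < k ∧ b < k
      · simp only [hz_def]
        rw [dif_pos hab, dif_pos (show b < k ∧ a < k from ⟨hab.2, hab.1⟩)]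
        exact hYc _ _
      · have h1 : z r s a b = 0 := by simp only [hz_def]; exact dif_neg hab
        have h2 : z s r b a = 0 := by
          simp only [hz_def]; exact dif_neg (fun hh => hab ⟨hh.2, hh.1⟩)
        rw [h1, h2, map_zero]
    have hColE : ∀ (r s : Fin m) (b : ℕ), b < k →
        RowE α β γ (fun n => u r s n b) (fun n => z r s n b)
          (fun n => if n ≤ k then (starRingEnd ℂ) (w b) * P n r s else 0) := by
      intro r s b hb
      refine rowE_congr α β γ _ _ _ _ _ _
        (rowE_conj α β γ _ _ _ (hRowE s r b hb))
        (fun n => (huc r s n b).symm) (fun n => (hzc r s n b).symm) ?_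
      intro n
      simp only [hc_def]
      rw [apply_ite (starRingEnd ℂ), map_zero, _root_.map_mul, hPc]
    have hCOLpoly : ∀ (r s : Fin m) (b : ℕ), b < k →
        ∑ n ∈ Finset.range k, (Polynomial.X * Polynomial.C (u r s n b)
            + Polynomial.C (z r s n b)) * φ n
          = Polynomial.C ((starRingEnd ℂ) (w b)) * Q r s := by
      intro r s b hb
      rw [hexp k (fun n => u r s n b) (fun n => z r s n b)
        (fun n hn => hu0 r s n b (Or.inl hn)) (fun n hn => hz0 r s n b (Or.inl hn))]
      rw [← hQgen r s ((starRingEnd ℂ) (w b))]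
      refine Finset.sum_congr rfl fun n _ => ?_
      exact congrArg (· * φ n) (congrArg Polynomial.C (hColE r s b hb n))
    have key : (∑ a ∈ Finset.range k, Polynomial.C (w a) * φ a) * Q r0 s0
        = (∑ a ∈ Finset.range k, Polynomial.C ((starRingEnd ℂ) (w a)) * φ a) * Q r0 s0 := by
      calc (∑ a ∈ Finset.range k, Polynomial.C (w a) * φ a) * Q r0 s0
          = ∑ a ∈ Finset.range k, φ a * (Polynomial.C (w a) * Q r0 s0) := by
            rw [Finset.sum_mul]; exact Finset.sum_congr rfl fun a _ => by ring
        _ = ∑ a ∈ Finset.range k, ∑ n ∈ Finset.range k, φ a *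
              ((Polynomial.X * Polynomial.C (u r0 s0 a n)
                + Polynomial.C (z r0 s0 a n)) * φ n) := by
            refine Finset.sum_congr rfl fun a ha => ?_
            rw [← hQR r0 s0 a, ← hROWpoly r0 s0 a (Finset.mem_range.mp ha), Finset.mul_sum]
        _ = ∑ n ∈ Finset.range k, ∑ a ∈ Finset.range k, φ a *
              ((Polynomial.X * Polynomial.C (u r0 s0 a n)
                + Polynomial.C (z r0 s0 a n)) * φ n) := Finset.sum_comm
        _ = ∑ n ∈ Finset.range k, φ n * ∑ a ∈ Finset.range k,
              ((Polynomial.X * Polynomial.C (u r0 s0 a n)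
                + Polynomial.C (z r0 s0 a n)) * φ a) := by
            refine Finset.sum_congr rfl fun n _ => ?_
            rw [Finset.mul_sum]
            exact Finset.sum_congr rfl fun a _ => by ring
        _ = ∑ n ∈ Finset.range k, φ n *
              (Polynomial.C ((starRingEnd ℂ) (w n)) * Q r0 s0) := by
            refine Finset.sum_congr rfl fun n hn => ?_
            rw [hCOLpoly r0 s0 n (Finset.mem_range.mp hn)]
        _ = (∑ a ∈ Finset.range k, Polynomial.C ((starRingEnd ℂ) (w a)) * φ a) * Q r0 s0 := by
            rw [Finset.sum_mul]; exact Finset.sum_congr rfl fun a _ => by ring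
    have hwconj : ∀ a, (starRingEnd ℂ) (w a) = w a := by
      have hcan := mul_right_cancel₀ hQne key
      have hzero : ∑ a ∈ Finset.range k,
          Polynomial.C (w a - (starRingEnd ℂ) (w a)) * φ a = 0 := by
        simp only [Polynomial.C_sub, sub_mul, Finset.sum_sub_distrib, hcan, sub_self]
      have hk1 : k - 1 + 1 = k := by omega
      rw [← hk1] at hzero
      have hall := hli (k-1) _ hzero
      intro a
      by_cases ha : a < k
      · exact (sub_eq_zero.mp (hall a (by omega))).symm
      · have h0 : w a = 0 := by simp only [hw_def]; exact dif_neg ha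
        rw [h0, map_zero]
    have husym : ∀ (r s : Fin m) (a b : ℕ),
        u r s a b = u r s b a ∧ z r s a b = z r s b a := by
      intro r s a b
      have hColE' : ∀ (b' : ℕ), b' < k →
          RowE α β γ (fun n => u r s n b') (fun n => z r s n b') (cf r s b') := by
        intro b' hb'
        refine rowE_congr α β γ _ _ _ _ _ _ (hColE r s b' hb')
          (fun n => rfl) (fun n => rfl) ?_
        intro n
        simp only [hc_def]
        rw [hwconj]
      have hres := auxUniq α β γ hα k (by omega)
        (fun a b => u r s a b - u r s b a) (fun a b => z r s a b - z r s b a)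
        (fun a b hab => by
          show u r s a b - u r s b a = 0
          rw [hu0 r s a b hab, hu0 r s b a (Or.symm hab), sub_self])
        (fun a b hab => by
          show z r s a b - z r s b a = 0
          rw [hz0 r s a b hab, hz0 r s b a (Or.symm hab), sub_self])
        (fun a ha => rowE_sub α β γ _ _ _ _ _ (hRowE r s a ha) (hColE' a ha))
        (fun b hb => rowE_sub α β γ _ _ _ _ _ (hColE' b hb) (hRowE r s b hb))
      exact ⟨sub_eq_zero.mp (hres.1 a b), sub_eq_zero.mp (hres.2 a b)⟩
    refine ⟨fun i j r s => ?_, fun i => ?_⟩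
    · simp only [Matrix.of_apply]
      have hx := (husym r s ((Fin.rev i : Fin k) : ℕ) ((Fin.rev j : Fin k) : ℕ)).1
      have hy := (husym r s ((Fin.rev i : Fin k) : ℕ) ((Fin.rev j : Fin k) : ℕ)).2
      rw [huval r s i j, huval r s j i] at hx
      rw [hzval r s i j, hzval r s j i] at hy
      rw [hx, hy]
    · have h := hwconj ((Fin.rev i : Fin k) : ℕ)
      rw [hwval i] at h
      exact Complex.conj_eq_iff_im.mp h
  · rintro ⟨hsym, hvim⟩
    have hXY : ∀ (i j : Fin k) (r s : Fin m),
        X (i,r) (j,s) = X (j,r) (i,s) ∧ Y (i,r) (j,s) = Y (j,r) (i,s) := by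
      intro i j r s
      have h := hsym i j r s
      simp only [Matrix.of_apply] at h
      exact auxPencilCoeff _ _ _ _ h
    have hwconj : ∀ a, (starRingEnd ℂ) (w a) = w a := by
      intro a
      simp only [hw_def]
      split_ifs with ha
      · exact Complex.conj_eq_iff_im.mpr (hvim _)
      · exact map_zero _
    have husym : ∀ (r s : Fin m) (a b : ℕ), u r s a b = u r s b a := by
      intro r s a b
      by_cases hab : a < k ∧ b < k
      · simp only [hu_def]
        rw [dif_pos hab, dif_pos (show b < k ∧ a < k from ⟨hab.2, hab.1⟩)]
        exact (hXY _ _ r s).1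
      · simp only [hu_def]
        rw [dif_neg hab, dif_neg (fun hh => hab ⟨hh.2, hh.1⟩)]
    have hzsym : ∀ (r s : Fin m) (a b : ℕ), z r s a b = z r s b a := by
      intro r s a b
      by_cases hab : a < k ∧ b < k
      · simp only [hz_def]
        rw [dif_pos hab, dif_pos (show b < k ∧ a < k from ⟨hab.2, hab.1⟩)]
        exact (hXY _ _ r s).2
      · simp only [hz_def]
        rw [dif_neg hab, dif_neg (fun hh => hab ⟨hh.2, hh.1⟩)]
    have hucol : ∀ (r s : Fin m) (b : ℕ), b < k →
        RowE α β γ (fun n => u r s n b) (fun n => z r s n b) (cf r s b) := by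
      intro r s b hb
      exact rowE_congr α β γ _ _ _ _ _ _ (hRowE r s b hb)
        (fun n => husym r s b n) (fun n => hzsym r s b n) (fun n => rfl)
    have hU'col : ∀ (r s : Fin m) (b : ℕ), b < k →
        RowE α β γ (fun n => (starRingEnd ℂ) (u s r b n))
          (fun n => (starRingEnd ℂ) (z s r b n)) (cf r s b) := by
      intro r s b hb
      refine rowE_congr α β γ _ _ _ _ _ _
        (rowE_conj α β γ _ _ _ (hRowE s r b hb)) (fun n => rfl) (fun n => rfl) ?_
      intro n
      simp only [hc_def]
      rw [apply_ite (starRingEnd ℂ), map_zero, _root_.map_mul, hPc, hwconj]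
    have hU'row : ∀ (r s : Fin m) (a : ℕ), a < k →
        RowE α β γ (fun n => (starRingEnd ℂ) (u s r n a))
          (fun n => (starRingEnd ℂ) (z s r n a)) (cf r s a) := by
      intro r s a ha
      exact rowE_congr α β γ _ _ _ _ _ _ (hU'col r s a ha)
        (fun n => by rw [husym s r a n]) (fun n => by rw [hzsym s r a n]) (fun n => rfl)
    have hkey : ∀ (r s : Fin m) (a b : ℕ),
        u r s a b = (starRingEnd ℂ) (u s r b a)
          ∧ z r s a b = (starRingEnd ℂ) (z s r b a) := by
      intro r s a b
      have hres := auxUniq α β γ hα k (by omega)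
        (fun a b => u r s a b - (starRingEnd ℂ) (u s r b a))
        (fun a b => z r s a b - (starRingEnd ℂ) (z s r b a))
        (fun a b hab => by
          show u r s a b - (starRingEnd ℂ) (u s r b a) = 0
          rw [hu0 r s a b hab, hu0 s r b a (Or.symm hab), map_zero, sub_self])
        (fun a b hab => by
          show z r s a b - (starRingEnd ℂ) (z s r b a) = 0
          rw [hz0 r s a b hab, hz0 s r b a (Or.symm hab), map_zero, sub_self])
        (fun a ha => rowE_sub α β γ _ _ _ _ _ (hRowE r s a ha) (hU'row r s a ha))
        (fun b hb => rowE_sub α β γ _ _ _ _ _ (hucol r s b hb) (hU'col r s b hb))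
      exact ⟨sub_eq_zero.mp (hres.1 a b), sub_eq_zero.mp (hres.2 a b)⟩
    constructor
    · refine Matrix.ext fun p q => ?_
      obtain ⟨i, r⟩ := p
      obtain ⟨j, s⟩ := q
      rw [Matrix.conjTranspose_apply, ← huval s r j i, ← huval r s i j,
        (hkey r s ((Fin.rev i : Fin k) : ℕ) ((Fin.rev j : Fin k) : ℕ)).1, starRingEnd_apply]
    · refine Matrix.ext fun p q => ?_
      obtain ⟨i, r⟩ := p
      obtain ⟨j, s⟩ := q
      rw [Matrix.conjTranspose_apply, ← hzval s r j i, ← hzval r s i j,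
        (hkey r s ((Fin.rev i : Fin k) : ℕ) ((Fin.rev j : Fin k) : ℕ)).2, starRingEnd_apply]
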